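/- arXiv:1408.2283 — 3 statements merged into one kernel-verified Lean document; each statement's English description precedes it below -/
import Mathlib

section
/- Let N ≥ 2 and let u₁, …, u_N be real numbers with 0 < uᵢ < N and ∑ᵢ uᵢ = p·N, where p is an integer with 1 ≤ p ≤ N/2. Set bᵢ = uᵢ − p. Then log(2 sin(pπ/N)) − (1/N) ∑ᵢ log(2 sin(π uᵢ/N)) ≥ (1/12) · (1/N) ∑ᵢ min(bᵢ²/p², 1). -/
open Real Finset


lemma lemC (s : ℝ) (hs : -1 < s) : s - Real.log (1+s) ≥ (1/6) * min (s^2) 1 := by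
  have h1 : (0:ℝ) < 1 + s := by linarith
  set r := Real.sqrt (1+s) with hrdef
  have hr0 : 0 < r := Real.sqrt_pos.2 h1
  have hr2 : r^2 = 1 + s := Real.sq_sqrt h1.le
  have hlog : Real.log (1+s) = 2 * Real.log r := by
    rw [← hr2, sq, Real.log_mul hr0.ne' hr0.ne']; ring
  have hlogr : Real.log r ≤ r - 1 := Real.log_le_sub_one_of_pos hr0
  have key : s - Real.log (1+s) ≥ (r-1)^2 := by
    rw [hlog]; nlinarith [hr2]
  rcases le_total (s^2) 1 with h | h
  · rw [min_eq_left h]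
    have hrr : r^2 ≤ 2 := by nlinarith
    have h6 : (r+1)^2 ≤ 6 := by nlinarith [sq_nonneg (r-1)]
    have hse : s^2 = (r-1)^2 * (r+1)^2 := by nlinarith [hr2]
    nlinarith [key, mul_le_mul_of_nonneg_left h6 (sq_nonneg (r-1))]
  · rw [min_eq_right h]
    have hs1 : 1 ≤ s := by nlinarith
    have hrr : 2 ≤ r^2 := by nlinarith
    nlinarith [key, hrr, hr0, sq_nonneg (r*r-2), mul_nonneg hr0.le hr0.le]


lemma g_hasDeriv (x : ℝ) (hx : x ∈ Set.Ioo 0 Real.pi) :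
    HasDerivAt (fun t => Real.cos t / Real.sin t - 1/t)
      (-(1/Real.sin x ^ 2) + 1/x^2) x := by
  have hs : 0 < Real.sin x := Real.sin_pos_of_pos_of_lt_pi hx.1 hx.2
  have h1 : HasDerivAt (fun t => Real.cos t / Real.sin t)
      ((-Real.sin x * Real.sin x - Real.cos x * Real.cos x) / Real.sin x ^ 2) x :=
    (Real.hasDerivAt_cos x).div (Real.hasDerivAt_sin x) hs.ne'
  have h2 : HasDerivAt (fun t : ℝ => 1/t) (-(1/x^2)) x := by
    simpa [one_div] using (hasDerivAt_inv hx.1.ne')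
  refine (h1.sub h2).congr_deriv ?_
  have hpyth := Real.sin_sq_add_cos_sq x
  field_simp
  linear_combination -hpyth

lemma gAnti : AntitoneOn (fun t => Real.cos t / Real.sin t - 1/t) (Set.Ioo 0 Real.pi) := by
  apply antitoneOn_of_deriv_nonpos (convex_Ioo 0 Real.pi)
  · intro x hx
    exact ((g_hasDeriv x hx).continuousAt).continuousWithinAt
  · rw [interior_Ioo]
    intro x hx
    exact ((g_hasDeriv x hx).differentiableAt).differentiableWithinAt
  · rw [interior_Ioo]
    intro x hx
    rw [(g_hasDeriv x hx).deriv]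
    have hs : 0 < Real.sin x := Real.sin_pos_of_pos_of_lt_pi hx.1 hx.2
    have hsx : Real.sin x ≤ x := Real.sin_le hx.1.le
    have : 1/x^2 ≤ 1/Real.sin x ^2 := by
      apply one_div_le_one_div_of_le (by positivity)
      nlinarith
    linarith

lemma lemB (a : ℝ) (ha : a ∈ Set.Ioo 0 Real.pi) (x : ℝ) (hx : x ∈ Set.Ioo 0 Real.pi) :
    Real.log (2*Real.sin a) + (Real.cos a/Real.sin a) * (x - a) - Real.log (2*Real.sin x)
      ≥ x/a - 1 - (Real.log x - Real.log a) := by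
  set C := Real.cos a / Real.sin a with hC
  set H : ℝ → ℝ := fun t => Real.log (2*Real.sin a) + C * (t - a) - Real.log (2*Real.sin t)
      - t/a + 1 + Real.log t - Real.log a with hH
  have hderiv : ∀ t ∈ Set.Ioo 0 Real.pi, HasDerivAt H
      ((Real.cos a/Real.sin a - 1/a) - (Real.cos t/Real.sin t - 1/t)) t := by
    intro t ht
    have hst : 0 < Real.sin t := Real.sin_pos_of_pos_of_lt_pi ht.1 ht.2
    have h1 : HasDerivAt (fun s : ℝ => Real.log (2*Real.sin s)) (2*Real.cos t/(2*Real.sin t)) t :=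
      (((Real.hasDerivAt_sin t).const_mul 2).log (by positivity : (0:ℝ) < 2*Real.sin t).ne')
    have h2 : HasDerivAt (fun s : ℝ => C * (s - a)) (C * 1) t :=
      ((hasDerivAt_id t).sub_const a).const_mul C
    have h3 : HasDerivAt (fun s : ℝ => s/a) (1/a) t := by
      simpa using (hasDerivAt_id t).div_const a
    have h4 : HasDerivAt Real.log t⁻¹ t := Real.hasDerivAt_log ht.1.ne'
    have := ((((((hasDerivAt_const t (Real.log (2*Real.sin a))).add h2).sub h1).sub
        h3).add_const 1).add h4).sub_const (Real.log a)
    refine this.congr_deriv ?_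
    rw [hC]
    field_simp
    ring
  have hHa : H a = 0 := by
    simp only [hH]
    rw [div_self ha.1.ne']
    ring
  have hmem : ∀ t, a ≤ t → t ≤ x → t ∈ Set.Ioo 0 Real.pi := fun t h1 h2 =>
    ⟨lt_of_lt_of_le ha.1 h1, lt_of_le_of_lt h2 hx.2⟩
  have hmem' : ∀ t, x ≤ t → t ≤ a → t ∈ Set.Ioo 0 Real.pi := fun t h1 h2 =>
    ⟨lt_of_lt_of_le hx.1 h1, lt_of_le_of_lt h2 ha.2⟩
  have hHx : 0 ≤ H x := by
    rcases lt_trichotomy a x with hax | hax | hax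
    · have hmono : MonotoneOn H (Set.Icc a x) := by
        apply monotoneOn_of_deriv_nonneg (convex_Icc a x)
        · intro t ht
          exact ((hderiv t (hmem t ht.1 ht.2)).continuousAt).continuousWithinAt
        · rw [interior_Icc]
          intro t ht
          exact ((hderiv t (hmem t ht.1.le ht.2.le)).differentiableAt).differentiableWithinAt
        · rw [interior_Icc]
          intro t ht
          have htm := hmem t ht.1.le ht.2.le
          rw [(hderiv t htm).deriv]
          have := gAnti ha htm ht.1.le
          simp only at this
          linarith
      have := hmono (Set.left_mem_Icc.2 hax.le) (Set.right_mem_Icc.2 hax.le) hax.le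
      linarith [hHa ▸ this]
    · rw [← hax, hHa]
    · have hmono : AntitoneOn H (Set.Icc x a) := by
        apply antitoneOn_of_deriv_nonpos (convex_Icc x a)
        · intro t ht
          exact ((hderiv t (hmem' t ht.1 ht.2)).continuousAt).continuousWithinAt
        · rw [interior_Icc]
          intro t ht
          exact ((hderiv t (hmem' t ht.1.le ht.2.le)).differentiableAt).differentiableWithinAt
        · rw [interior_Icc]
          intro t ht
          have htm := hmem' t ht.1.le ht.2.le
          rw [(hderiv t htm).deriv]
          have := gAnti htm ha ht.2.le
          simp only at this
          linarith
      have := hmono (Set.left_mem_Icc.2 hax.le) (Set.right_mem_Icc.2 hax.le) hax.le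
      linarith [hHa ▸ this]
  simp only [hH] at hHx
  linarith

theorem quantitative_jensen_log_sin (N : ℕ) (hN : 2 ≤ N) (u : Fin N → ℝ)
    (hu : ∀ i, 0 < u i ∧ u i < N) (p : ℤ) (hp1 : 1 ≤ p) (hp2 : (p : ℝ) ≤ N / 2)
    (hsum : ∑ i, u i = (p : ℝ) * N) :
    Real.log (2 * Real.sin ((p : ℝ) * Real.pi / N)) -
        (1 / (N : ℝ)) * ∑ i, Real.log (2 * Real.sin (Real.pi * u i / N)) ≥
      (1 / 12) * ((1 / (N : ℝ)) *
        ∑ i, min ((u i - (p : ℝ)) ^ 2 / (p : ℝ) ^ 2) 1) := by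
  have hN0 : (0:ℝ) < N := by positivity
  have hp0 : (0:ℝ) < (p:ℝ) := by exact_mod_cast hp1.trans_lt' (by norm_num)
  have hπ := Real.pi_pos
  set a : ℝ := (p:ℝ) * Real.pi / N with hadef
  have ha : a ∈ Set.Ioo 0 Real.pi := by
    constructor
    · positivity
    · rw [hadef, div_lt_iff₀ hN0]
      nlinarith
  set A : ℝ := Real.log (2 * Real.sin a) with hA
  set C : ℝ := Real.cos a / Real.sin a with hC
  -- pointwise bound
  have hpt : ∀ i, A + C * (Real.pi * u i / N - a) - Real.log (2 * Real.sin (Real.pi * u i / N))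
      ≥ (1/6) * min ((u i - (p:ℝ))^2 / (p:ℝ)^2) 1 := by
    intro i
    obtain ⟨hui0, huiN⟩ := hu i
    have hxi : Real.pi * u i / N ∈ Set.Ioo 0 Real.pi := by
      constructor
      · positivity
      · rw [div_lt_iff₀ hN0]; nlinarith
    have hB := lemB a ha (Real.pi * u i / N) hxi
    have hs : -1 < u i / (p:ℝ) - 1 := by
      have : 0 < u i / (p:ℝ) := by positivity
      linarith
    have hCineq := lemC (u i / (p:ℝ) - 1) hs
    have hratio : Real.pi * u i / N / a = u i / (p:ℝ) := by
      rw [hadef]; field_simp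
    have hlogr : Real.log (Real.pi * u i / N) - Real.log a = Real.log (u i) - Real.log (p:ℝ) := by
      rw [← Real.log_div (by positivity) (ne_of_gt ha.1), hratio,
        Real.log_div hui0.ne' hp0.ne']
    have hlog2 : Real.log (1 + (u i / (p:ℝ) - 1)) = Real.log (u i) - Real.log (p:ℝ) := by
      rw [show 1 + (u i / (p:ℝ) - 1) = u i / (p:ℝ) by ring, Real.log_div hui0.ne' hp0.ne']
    have hsq : (u i / (p:ℝ) - 1)^2 = (u i - (p:ℝ))^2 / (p:ℝ)^2 := by
      rw [div_sub' hp0.ne', div_pow, mul_one]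
    rw [hlog2, hsq] at hCineq
    have hdiv : Real.pi * u i / N / a - 1 = u i / (p:ℝ) - 1 := by rw [hratio]
    calc A + C * (Real.pi * u i / N - a) - Real.log (2 * Real.sin (Real.pi * u i / N))
        ≥ Real.pi * u i / N / a - 1 - (Real.log (Real.pi * u i / N) - Real.log a) := hB
      _ = (u i / (p:ℝ) - 1) - (Real.log (u i) - Real.log (p:ℝ)) := by rw [hlogr, hdiv]
      _ ≥ (1/6) * min ((u i - (p:ℝ))^2 / (p:ℝ)^2) 1 := hCineq
  -- sum it
  have hsum0 : ∑ i, (Real.pi * u i / N - a) = 0 := by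
    rw [Finset.sum_sub_distrib, Finset.sum_const, card_univ, Fintype.card_fin, nsmul_eq_mul]
    have : ∑ i, Real.pi * u i / N = Real.pi * (∑ i, u i) / N := by
      simp [Finset.mul_sum, Finset.sum_div]
    rw [this, hsum, hadef]
    field_simp
    ring
  have hkey : (N:ℝ) * A - ∑ i, Real.log (2 * Real.sin (Real.pi * u i / N))
      ≥ (1/6) * ∑ i, min ((u i - (p:ℝ))^2 / (p:ℝ)^2) 1 := by
    have := Finset.sum_le_sum (s := Finset.univ)
      (f := fun i => (1/6) * min ((u i - (p:ℝ))^2/(p:ℝ)^2) 1)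
      (g := fun i => A + C * (Real.pi * u i / N - a) - Real.log (2 * Real.sin (Real.pi * u i / N)))
      (fun i _ => hpt i)
    have e : ∑ x : Fin N, C * (Real.pi * u x / N - a) = 0 := by
      rw [← Finset.mul_sum, hsum0, mul_zero]
    rw [Finset.sum_sub_distrib, Finset.sum_add_distrib, Finset.sum_const, e,
      card_univ, Fintype.card_fin, nsmul_eq_mul, ← Finset.mul_sum, add_zero] at this
    exact this
  have hSnn : 0 ≤ ∑ i, min ((u i - (p:ℝ))^2 / (p:ℝ)^2) 1 :=
    Finset.sum_nonneg fun i _ => le_min (by positivity) zero_le_one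
  set S := ∑ i, min ((u i - (p:ℝ))^2 / (p:ℝ)^2) 1
  set B := ∑ i, Real.log (2 * Real.sin (Real.pi * u i / N))
  have hrw : A - (1/(N:ℝ)) * B = (1/(N:ℝ)) * ((N:ℝ) * A - B) := by
    field_simp
  rw [hrw]
  calc (1/12) * ((1/(N:ℝ)) * S) ≤ (1/(N:ℝ)) * ((1/6) * S) := by
        rw [show (1/(N:ℝ)) * ((1/6) * S) = (1/6) * ((1/(N:ℝ)) * S) by ring]
        have : 0 ≤ (1/(N:ℝ)) * S := by positivity
        linarith
    _ ≤ (1/(N:ℝ)) * ((N:ℝ) * A - B) := by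
        apply mul_le_mul_of_nonneg_left hkey (by positivity)
end

section
/- Let N ≥ 2 and let a₁ < a₂ < ⋯ < a_N be points in [0, N). Then W(E_{a_i}) = −(π/N) ∑_{i≠j} log|2 sin(π(a_i − a_j)/N)| − π log(2π/N) ≥ −π log(2π), with equality if and only if the points are equally spaced, i.e., a_{i+1} − a_i = 1 for all i (indices mod N, with a_{N+1} = a₁ + N). -/
open Real Finset



lemma sinPos {c x : ℝ} (hc : 0 < c) (hx : x ∈ Set.Ioo (0:ℝ) c) :
    0 < Real.sin (Real.pi * x / c) := by
  apply Real.sin_pos_of_pos_of_lt_pi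
  · exact div_pos (mul_pos Real.pi_pos hx.1) hc
  · rw [div_lt_iff₀ hc]
    nlinarith [Real.pi_pos, hx.2]

lemma logSinConcave {c : ℝ} (hc : 0 < c) :
    StrictConcaveOn ℝ (Set.Ioo (0:ℝ) c) (fun x => Real.log (2 * Real.sin (Real.pi * x / c))) := by
  have memIcc : ∀ x ∈ Set.Ioo (0:ℝ) c, Real.pi * x / c ∈ Set.Icc 0 Real.pi := by
    intro x hx
    constructor
    · have := hx.1; positivity
    · rw [div_le_iff₀ hc]; nlinarith [Real.pi_pos, hx.2]
  constructor
  · exact convex_Ioo 0 c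
  · intro x hx y hy hxy a b ha hb hab
    have hsx := sinPos hc hx
    have hsy := sinPos hc hy
    have hne : Real.pi * x / c ≠ Real.pi * y / c := by
      intro h
      apply hxy
      field_simp at h
      exact h
    have h1 := strictConcaveOn_sin_Icc.2 (memIcc x hx) (memIcc y hy) hne ha hb hab
    have key : Real.pi * (a • x + b • y) / c
        = a • (Real.pi * x / c) + b • (Real.pi * y / c) := by
      simp only [smul_eq_mul]
      field_simp
    simp only [smul_eq_mul] at h1 key ⊢
    rw [key]
    have hpos : 0 < a * (2 * Real.sin (Real.pi * x / c)) + b * (2 * Real.sin (Real.pi * y / c)) := by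
      positivity
    have h2 : Real.log (a * (2 * Real.sin (Real.pi * x / c)) + b * (2 * Real.sin (Real.pi * y / c)))
        < Real.log (2 * Real.sin (a * (Real.pi * x / c) + b * (Real.pi * y / c))) := by
      apply Real.log_lt_log hpos
      nlinarith [h1]
    have h3 : a • Real.log (2 * Real.sin (Real.pi * x / c)) + b • Real.log (2 * Real.sin (Real.pi * y / c))
        ≤ Real.log (a • (2 * Real.sin (Real.pi * x / c)) + b • (2 * Real.sin (Real.pi * y / c))) :=
      strictConcaveOn_log_Ioi.concaveOn.2 (Set.mem_Ioi.mpr (by positivity))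
        (Set.mem_Ioi.mpr (by positivity)) ha.le hb.le hab
    simp only [smul_eq_mul] at h3
    linarith

lemma absOneSubExp {θ : ℝ} (h0 : 0 ≤ θ) (h2 : θ ≤ 2 * Real.pi) :
    ‖(1 - Complex.exp (θ * Complex.I))‖ = 2 * Real.sin (θ / 2) := by
  have : (1 - Complex.exp (θ * Complex.I))
      = Complex.ofReal (1 - Real.cos θ) + Complex.ofReal (- Real.sin θ) * Complex.I := by
    rw [Complex.exp_mul_I]
    push_cast
    ring
  rw [this, Complex.norm_add_mul_I, Real.sin_half_eq_sqrt h0 h2]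
  have h : (1 - Real.cos θ) ^ 2 + (- Real.sin θ) ^ 2 = 4 * ((1 - Real.cos θ) / 2) := by
    nlinarith [Real.sin_sq_add_cos_sq θ]
  rw [h, show (4:ℝ) = 2^2 by norm_num, Real.sqrt_mul (by positivity), Real.sqrt_sq (by norm_num)]



lemma sumIccRange {M : Type*} [AddCommMonoid M] (n : ℕ) (g : ℕ → M) :
    ∑ p ∈ Finset.Icc 1 n, g p = ∑ k ∈ Finset.range n, g (k + 1) := by
  apply Finset.sum_nbij' (fun p => p - 1) (fun k => k + 1)
  · intro p hp; simp only [Finset.mem_Icc] at hp; simp only [Finset.mem_range]; omega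
  · intro k hk; simp only [Finset.mem_range] at hk; simp only [Finset.mem_Icc]; omega
  · intro p hp; simp only [Finset.mem_Icc] at hp; omega
  · intro k hk; omega
  · intro p hp; simp only [Finset.mem_Icc] at hp; congr 1; omega

set_option maxHeartbeats 1000000 in
lemma sumLogSin (N : ℕ) (hN : 2 ≤ N) :
    ∑ p ∈ Finset.Icc 1 (N - 1), Real.log (2 * Real.sin (Real.pi * p / N)) = Real.log N := by
  obtain ⟨n, rfl⟩ : ∃ n, N = n + 1 := ⟨N - 1, by omega⟩
  have hn : 1 ≤ n := by omega
  simp only [Nat.add_sub_cancel]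
  have hμ := Complex.isPrimitiveRoot_exp (n+1) (by omega : n + 1 ≠ 0)
  have hprod := hμ.prod_one_sub_pow_eq_order
  have habs : ∀ k ∈ Finset.range n,
      ‖(1 - Complex.exp (2 * Real.pi * Complex.I / ((n+1:ℕ):ℂ)) ^ (k + 1))‖
        = 2 * Real.sin (Real.pi * (k + 1) / (n + 1)) := by
    intro k hk
    simp only [Finset.mem_range] at hk
    have h1 : Complex.exp (2 * Real.pi * Complex.I / ((n+1:ℕ):ℂ)) ^ (k + 1)
        = Complex.exp (((2 * Real.pi * (k + 1) / (n + 1) : ℝ) : ℂ) * Complex.I) := by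
      rw [← Complex.exp_nat_mul]
      congr 1
      push_cast
      ring
    have hnp : (0:ℝ) < (n:ℝ) + 1 := by positivity
    have hθ0 : (0:ℝ) ≤ 2 * Real.pi * (k + 1) / (n + 1) := by positivity
    have hθ2 : 2 * Real.pi * ((k:ℝ) + 1) / (n + 1) ≤ 2 * Real.pi := by
      rw [div_le_iff₀ hnp]
      have : ((k:ℝ) + 1) ≤ (n:ℝ) + 1 := by
        have : (k:ℝ) ≤ (n:ℝ) := by exact_mod_cast hk.le
        linarith
      nlinarith [Real.pi_pos]
    rw [h1, absOneSubExp hθ0 hθ2]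
    congr 1
    ring_nf
  have hreal : ∏ k ∈ Finset.range n, (2 * Real.sin (Real.pi * (k + 1) / (n + 1))) = (n:ℝ) + 1 := by
    have := congrArg (‖·‖) hprod
    rw [norm_prod] at this
    rw [Finset.prod_congr rfl habs] at this
    rw [this]
    rw [show ((n:ℂ) + 1) = ((((n:ℝ) + 1) : ℝ) : ℂ) by push_cast; ring]
    rw [Complex.norm_real, Real.norm_eq_abs, abs_of_pos (by positivity)]
  have hlog := congrArg Real.log hreal
  rw [Real.log_prod] at hlog
  · rw [sumIccRange]
    push_cast
    exact hlog
  · intro k hk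
    simp only [Finset.mem_range] at hk
    have : (0:ℝ) < Real.sin (Real.pi * (k + 1) / (n + 1)) := by
      apply Real.sin_pos_of_pos_of_lt_pi
      · positivity
      · rw [div_lt_iff₀ (by positivity : (0:ℝ) < (n:ℝ)+1)]
        have : ((k:ℝ) + 1) < (n:ℝ) + 1 := by
          have : (k:ℝ) < (n:ℝ) := by exact_mod_cast hk
          linarith
        nlinarith [Real.pi_pos]
    positivity



lemma sumShift (N : ℕ) (hN : 1 ≤ N) (g : ℕ → ℝ) (hg : g (N + 1) = g 1 + N) :
    ∑ i ∈ Finset.Icc 1 N, g (i + 1) = (∑ i ∈ Finset.Icc 1 N, g i) + N := by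
  have h1 : ∑ i ∈ Finset.Icc 1 N, g (i + 1) = ∑ i ∈ Finset.Icc 2 (N + 1), g i := by
    apply Finset.sum_nbij' (fun p => p + 1) (fun k => k - 1)
    · intro p hp; simp only [Finset.mem_Icc] at hp ⊢; omega
    · intro k hk; simp only [Finset.mem_Icc] at hk ⊢; omega
    · intro p hp; omega
    · intro k hk; simp only [Finset.mem_Icc] at hk; omega
    · intro p hp; rfl
  have h2 : ∑ i ∈ Finset.Icc 2 (N + 1), g i = (∑ i ∈ Finset.Icc 2 N, g i) + g (N + 1) :=
    Finset.sum_Icc_succ_top (by omega) g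
  have h3 : ∑ i ∈ Finset.Icc 1 N, g i = g 1 + ∑ i ∈ Finset.Icc 2 N, g i := by
    rw [show Finset.Icc 1 N = insert 1 (Finset.Icc 2 N) by
      ext x; simp only [Finset.mem_insert, Finset.mem_Icc]; omega]
    rw [Finset.sum_insert (by simp)]
  rw [h1, h2, h3, hg]
  ring

lemma sumGap (N : ℕ) (hN : 1 ≤ N) (a : ℕ → ℝ) (hper : ∀ i, a (i + N) = a i + N) (p : ℕ) :
    ∑ i ∈ Finset.Icc 1 N, (a (i + p) - a i) = p * N := by
  induction p with
  | zero => simp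
  | succ p ih =>
    have hs := sumShift N hN (fun i => a (i + p)) (by
      show a (N + 1 + p) = a (1 + p) + N
      rw [show N + 1 + p = (1 + p) + N by ring, hper (1 + p)])
    have e1 : ∑ i ∈ Finset.Icc 1 N, (a (i + (p + 1)) - a i)
        = ∑ i ∈ Finset.Icc 1 N, (a (i + 1 + p) - a i) := by
      apply Finset.sum_congr rfl
      intro i _
      rw [show i + (p + 1) = i + 1 + p by ring]
    rw [e1]
    have e2 : ∑ i ∈ Finset.Icc 1 N, (a (i + 1 + p) - a i)
        = (∑ i ∈ Finset.Icc 1 N, (a (i + p) - a i)) + N := by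
      rw [Finset.sum_sub_distrib, Finset.sum_sub_distrib, hs]
      ring
    rw [e2, ih]
    push_cast
    ring
theorem W_ge_W_lattice_iff (N : ℕ) (hN : 2 ≤ N) (a : ℕ → ℝ)
    (hper : ∀ i, a (i + N) = a i + N)
    (hmono : ∀ i j, 1 ≤ i → i < j → j ≤ N → a i < a j)
    (hrange : ∀ i, 1 ≤ i → i ≤ N → a i ∈ Set.Ico (0 : ℝ) N) :
    -(Real.pi / N) * (∑ i ∈ Finset.Icc 1 N, ∑ j ∈ Finset.Icc 1 N,
          if i ≠ j then Real.log |2 * Real.sin (Real.pi * (a i - a j) / N)| else 0) -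
        Real.pi * Real.log (2 * Real.pi / N) ≥ -Real.pi * Real.log (2 * Real.pi) ∧
    (-(Real.pi / N) * (∑ i ∈ Finset.Icc 1 N, ∑ j ∈ Finset.Icc 1 N,
          if i ≠ j then Real.log |2 * Real.sin (Real.pi * (a i - a j) / N)| else 0) -
        Real.pi * Real.log (2 * Real.pi / N) = -Real.pi * Real.log (2 * Real.pi) ↔
      ∀ i, 1 ≤ i → i ≤ N → a (i + 1) - a i = 1) := by
  have hNR : (0:ℝ) < (N:ℝ) := by
    have : 0 < N := by omega
    exact_mod_cast this
  set S : ℝ := ∑ i ∈ Finset.Icc 1 N, ∑ j ∈ Finset.Icc 1 N,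
      if i ≠ j then Real.log |2 * Real.sin (Real.pi * (a i - a j) / N)| else 0 with hSdef
  -- bounds on the gaps
  have hu : ∀ i ∈ Finset.Icc 1 N, ∀ p ∈ Finset.Icc 1 (N - 1),
      a (i + p) - a i ∈ Set.Ioo (0:ℝ) (N:ℝ) := by
    intro i hi p hp
    simp only [Finset.mem_Icc] at hi hp
    by_cases hle : i + p ≤ N
    · have h1 : a i < a (i + p) := hmono i (i + p) hi.1 (by omega) hle
      have h2 := hrange (i + p) (by omega) hle
      have h3 := hrange i hi.1 hi.2
      exact ⟨by linarith, by linarith [h2.2, h3.1]⟩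
    · set j := i + p - N with hj
      have hidx : i + p = j + N := by omega
      have hj1 : 1 ≤ j := by omega
      have hj2 : j < i := by omega
      have h1 : a j < a i := hmono j i hj1 hj2 hi.2
      have h2 := hrange j hj1 (by omega)
      have h3 := hrange i hi.1 hi.2
      rw [hidx, hper j]
      exact ⟨by linarith [h2.1, h3.2], by linarith⟩
  -- reindex inner sum
  have hinner : ∀ i ∈ Finset.Icc 1 N,
      (∑ j ∈ Finset.Icc 1 N,
        if i ≠ j then Real.log |2 * Real.sin (Real.pi * (a i - a j) / N)| else 0)
      = ∑ p ∈ Finset.Icc 1 (N - 1),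
          Real.log (2 * Real.sin (Real.pi * (a (i + p) - a i) / N)) := by
    intro i hi
    have hi' := hi
    simp only [Finset.mem_Icc] at hi'
    have step1 : (∑ j ∈ Finset.Icc 1 N,
        if i ≠ j then Real.log |2 * Real.sin (Real.pi * (a i - a j) / N)| else 0)
        = ∑ j ∈ (Finset.Icc 1 N).erase i,
            Real.log |2 * Real.sin (Real.pi * (a i - a j) / N)| := by
      rw [← Finset.sum_erase (f := fun j =>
        if i ≠ j then Real.log |2 * Real.sin (Real.pi * (a i - a j) / N)| else 0)
        (Finset.Icc 1 N)
        (show (if i ≠ i then Real.log |2 * Real.sin (Real.pi * (a i - a i) / N)| else 0) = 0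
          by simp)]
      apply Finset.sum_congr rfl
      intro j hj
      rw [if_pos (Finset.ne_of_mem_erase hj).symm]
    rw [step1]
    symm
    apply Finset.sum_nbij' (fun p => if i + p ≤ N then i + p else i + p - N)
      (fun j => if i < j then j - i else j + N - i)
    · intro p hp
      simp only [Finset.mem_Icc] at hp
      simp only [Finset.mem_erase, Finset.mem_Icc]
      split_ifs <;> omega
    · intro j hj
      simp only [Finset.mem_erase, Finset.mem_Icc] at hj
      simp only [Finset.mem_Icc]
      split_ifs <;> omega
    · intro p hp
      simp only [Finset.mem_Icc] at hp
      split_ifs <;> omega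
    · intro j hj
      simp only [Finset.mem_erase, Finset.mem_Icc] at hj
      split_ifs <;> omega
    · intro p hp
      have hp' := hp
      simp only [Finset.mem_Icc] at hp'
      have humem := hu i hi p hp
      have hs : 0 < Real.sin (Real.pi * (a (i + p) - a i) / N) := sinPos hNR humem
      by_cases hle : i + p ≤ N
      · rw [if_pos hle]
        have e1 : Real.pi * (a i - a (i + p)) / N
            = -(Real.pi * (a (i + p) - a i) / N) := by ring
        rw [e1, Real.sin_neg, mul_neg, abs_neg, abs_of_pos (by positivity)]
      · rw [if_neg hle]
        set j := i + p - N with hjdef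
        have hidx : i + p = j + N := by omega
        have e1 : a i - a j = N - (a (i + p) - a i) := by
          rw [hidx, hper j]; ring
        have e2 : Real.pi * (a i - a j) / N
            = Real.pi - Real.pi * (a (i + p) - a i) / N := by
          rw [e1]
          field_simp
        rw [e2, Real.sin_pi_sub, abs_of_pos (by positivity)]
  -- rewrite S
  have hS : S = ∑ p ∈ Finset.Icc 1 (N - 1), ∑ i ∈ Finset.Icc 1 N,
      Real.log (2 * Real.sin (Real.pi * (a (i + p) - a i) / N)) := by
    rw [hSdef, Finset.sum_congr rfl hinner, Finset.sum_comm]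
  -- Jensen for each p
  have hconc := logSinConcave (c := (N:ℝ)) hNR
  have hcard : ((Finset.Icc 1 N).card : ℝ) = (N : ℝ) := by
    rw [Nat.card_Icc]; push_cast [Nat.add_sub_cancel]; ring
  have jensen : ∀ p ∈ Finset.Icc 1 (N - 1),
      ((∑ i ∈ Finset.Icc 1 N, Real.log (2 * Real.sin (Real.pi * (a (i + p) - a i) / N)))
        ≤ N * Real.log (2 * Real.sin (Real.pi * p / N))
      ∧ ((∑ i ∈ Finset.Icc 1 N, Real.log (2 * Real.sin (Real.pi * (a (i + p) - a i) / N)))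
          = N * Real.log (2 * Real.sin (Real.pi * p / N))
        ↔ ∀ i ∈ Finset.Icc 1 N, a (i + p) - a i = p)) := by
    intro p hp
    have hw1 : ∑ _i ∈ Finset.Icc 1 N, (N:ℝ)⁻¹ = 1 := by
      rw [Finset.sum_const, nsmul_eq_mul, hcard]
      field_simp
    have hmem : ∀ i ∈ Finset.Icc 1 N, a (i + p) - a i ∈ Set.Ioo (0:ℝ) (N:ℝ) :=
      fun i hi => hu i hi p hp
    have hmean : ∑ i ∈ Finset.Icc 1 N, (N:ℝ)⁻¹ • (a (i + p) - a i) = (p:ℝ) := by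
      simp only [smul_eq_mul]
      rw [← Finset.mul_sum, sumGap N (by omega) a hper p]
      field_simp
    have hle := hconc.concaveOn.le_map_sum (fun i _ => by positivity) hw1 hmem
    rw [hmean] at hle
    have hiff := hconc.map_sum_eq_iff (fun i _ => by positivity) hw1 hmem
    rw [hmean] at hiff
    have hsum_smul : ∑ i ∈ Finset.Icc 1 N,
        (N:ℝ)⁻¹ • Real.log (2 * Real.sin (Real.pi * (a (i + p) - a i) / N))
        = (N:ℝ)⁻¹ * ∑ i ∈ Finset.Icc 1 N,
            Real.log (2 * Real.sin (Real.pi * (a (i + p) - a i) / N)) := by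
      simp only [smul_eq_mul]
      rw [Finset.mul_sum]
    constructor
    · rw [hsum_smul] at hle
      have := mul_le_mul_of_nonneg_left hle (le_of_lt hNR)
      calc (∑ i ∈ Finset.Icc 1 N, Real.log (2 * Real.sin (Real.pi * (a (i + p) - a i) / N)))
          = (N:ℝ) * ((N:ℝ)⁻¹ * ∑ i ∈ Finset.Icc 1 N,
              Real.log (2 * Real.sin (Real.pi * (a (i + p) - a i) / N))) := by
            field_simp
        _ ≤ (N:ℝ) * Real.log (2 * Real.sin (Real.pi * (p:ℝ) / N)) := this
    · rw [hsum_smul] at hiff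
      constructor
      · intro h
        have : Real.log (2 * Real.sin (Real.pi * (p:ℝ) / N))
            = (N:ℝ)⁻¹ * ∑ i ∈ Finset.Icc 1 N,
                Real.log (2 * Real.sin (Real.pi * (a (i + p) - a i) / N)) := by
          rw [h]; field_simp
        exact hiff.mp this
      · intro h
        have h2 := hiff.mpr h
        rw [h2]
        field_simp
  -- the sum over p of the lattice values
  have hlat := sumLogSin N hN
  have hle : S ≤ (N:ℝ) * Real.log N := by
    rw [hS]
    calc ∑ p ∈ Finset.Icc 1 (N - 1), ∑ i ∈ Finset.Icc 1 N,
          Real.log (2 * Real.sin (Real.pi * (a (i + p) - a i) / N))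
        ≤ ∑ p ∈ Finset.Icc 1 (N - 1), (N:ℝ) * Real.log (2 * Real.sin (Real.pi * p / N)) :=
          Finset.sum_le_sum (fun p hp => (jensen p hp).1)
      _ = (N:ℝ) * ∑ p ∈ Finset.Icc 1 (N - 1), Real.log (2 * Real.sin (Real.pi * p / N)) := by
          rw [Finset.mul_sum]
      _ = (N:ℝ) * Real.log N := by rw [hlat]
  have heq : S = (N:ℝ) * Real.log N ↔ ∀ i, 1 ≤ i → i ≤ N → a (i + 1) - a i = 1 := by
    constructor
    · intro h
      rw [hS] at h
      have h2 : ∀ p ∈ Finset.Icc 1 (N - 1),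
          (∑ i ∈ Finset.Icc 1 N, Real.log (2 * Real.sin (Real.pi * (a (i + p) - a i) / N)))
          = (N:ℝ) * Real.log (2 * Real.sin (Real.pi * p / N)) := by
        apply (Finset.sum_eq_sum_iff_of_le (fun p hp => (jensen p hp).1)).mp
        rw [h, ← Finset.mul_sum, hlat]
      have h1 := (jensen 1 (by simp only [Finset.mem_Icc]; omega)).2.mp
        (h2 1 (by simp only [Finset.mem_Icc]; omega))
      intro i hi1 hi2
      have := h1 i (by simp only [Finset.mem_Icc]; exact ⟨hi1, hi2⟩)
      simpa using this
    · intro hgap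
      -- extend the gap property
      have hgap' : ∀ i, 1 ≤ i → a (i + 1) - a i = 1 := by
        intro i
        induction i using Nat.strong_induction_on with
        | _ i ih =>
          intro hi
          by_cases hle : i ≤ N
          · exact hgap i hi hle
          · have h1 := hper (i - N + 1)
            rw [show (i - N + 1) + N = i + 1 by omega] at h1
            have h2 := hper (i - N)
            rw [show (i - N) + N = i by omega] at h2
            have h3 := ih (i - N) (by omega) (by omega)
            rw [h1, h2]
            have : a (i - N + 1) - a (i - N) = 1 := by
              have : i - N + 1 = (i - N) + 1 := rfl
              rw [this]; exact h3
            linarith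
      have hup : ∀ p i, 1 ≤ i → a (i + p) - a i = p := by
        intro p
        induction p with
        | zero => intro i _; simp
        | succ p ih =>
          intro i hi
          have h1 := hgap' (i + p) (by omega)
          have h2 := ih i hi
          have : a (i + (p + 1)) = a (i + p + 1) := by rw [show i + (p+1) = i + p + 1 by ring]
          rw [this]
          push_cast
          linarith
      rw [hS]
      have : ∀ p ∈ Finset.Icc 1 (N - 1),
          (∑ i ∈ Finset.Icc 1 N, Real.log (2 * Real.sin (Real.pi * (a (i + p) - a i) / N)))
          = (N:ℝ) * Real.log (2 * Real.sin (Real.pi * p / N)) := by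
        intro p hp
        exact (jensen p hp).2.mpr (fun i hi => by
          simp only [Finset.mem_Icc] at hi
          exact hup p i hi.1)
      rw [Finset.sum_congr rfl this, ← Finset.mul_sum, hlat]
  -- final algebra
  have hlogdiv : Real.log (2 * Real.pi / N) = Real.log (2 * Real.pi) - Real.log N :=
    Real.log_div (by positivity) (ne_of_gt hNR)
  have hπN : (0:ℝ) < Real.pi / N := by positivity
  constructor
  · rw [hlogdiv]
    have h1 : (Real.pi / N) * S ≤ (Real.pi / N) * ((N:ℝ) * Real.log N) :=
      mul_le_mul_of_nonneg_left hle (le_of_lt hπN)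
    have h2 : (Real.pi / N) * ((N:ℝ) * Real.log N) = Real.pi * Real.log N := by
      field_simp
    nlinarith [h1, h2]
  · rw [hlogdiv]
    rw [← heq]
    constructor
    · intro h
      have h2 : (Real.pi / N) * S = Real.pi * Real.log N := by linarith
      have h3 : S = (N:ℝ) * Real.log N := by
        calc S = ((N:ℝ)/Real.pi) * ((Real.pi / N) * S) := by
              field_simp
          _ = ((N:ℝ)/Real.pi) * (Real.pi * Real.log N) := by rw [h2]
          _ = (N:ℝ) * Real.log N := by
              field_simp
      exact h3
    · intro h
      rw [h]
      have h2 : (Real.pi / N) * ((N:ℝ) * Real.log N) = Real.pi * Real.log N := by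
        field_simp
      linarith [h2]
end

section
/- Let N ≥ 2, let a₁ < ⋯ < a_N be points in [0, N), set u_{p,i} = a_{i+p} − a_i with convention a_{N+l} = a_l + N, and b_{p,i} = u_{p,i} − p. Then there is a universal constant C > 0 such that W(E_{a_i}) − W(ℤ) ≥ C ∑_{p=1}^{⌊N/2⌋} (1/N) ∑_{i=1}^N min(b_{p,i}²/p², 1), where W(E_{a_i}) = −(π/N) ∑_{i≠j} log|2 sin(π(a_i−a_j)/N)| − π log(2π/N) and W(ℤ) = −π log(2π). -/
open Real Finset


lemma abs_one_sub_exp (θ : ℝ) (h0 : 0 ≤ θ) (h2 : θ ≤ 2 * π) :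
    ‖1 - Complex.exp (θ * Complex.I)‖ = 2 * Real.sin (θ / 2) := by
  have hsin : 0 ≤ Real.sin (θ / 2) := by
    apply Real.sin_nonneg_of_nonneg_of_le_pi (by linarith)
    linarith
  rw [Complex.exp_mul_I]
  have : (1 : ℂ) - (Complex.cos θ + Complex.sin θ * Complex.I)
      = Complex.ofReal (1 - Real.cos θ) + Complex.ofReal (-Real.sin θ) * Complex.I := by
    push_cast
    ring
  rw [this, Complex.norm_add_mul_I]
  rw [show (1 - Real.cos θ)^2 + (-Real.sin θ)^2 = 2 * (1 - Real.cos θ) by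
    have := Real.sin_sq_add_cos_sq θ; nlinarith]
  have hh : 1 - Real.cos θ = 2 * Real.sin (θ/2) ^ 2 := by
    have h1 : Real.cos (2 * (θ/2)) = 2 * Real.cos (θ/2) ^ 2 - 1 := Real.cos_two_mul _
    rw [show 2*(θ/2) = θ by ring] at h1
    have h2 := Real.sin_sq_add_cos_sq (θ/2)
    nlinarith
  rw [hh, show 2 * (2 * Real.sin (θ/2)^2) = (2 * Real.sin (θ/2))^2 by ring]
  rw [Real.sqrt_sq (by linarith)]

lemma prod_sin (n : ℕ) (hn : 1 ≤ n) :
    ∑ p ∈ Finset.Icc 1 (n - 1), Real.log (2 * Real.sin (π * p / n)) = Real.log n := by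
  obtain ⟨m, rfl⟩ : ∃ m, n = m + 1 := ⟨n - 1, by omega⟩
  have hprim := Complex.isPrimitiveRoot_exp (m+1) (by omega)
  have hprod := hprim.prod_one_sub_pow_eq_order
  have habs := congrArg (‖·‖) hprod
  rw [norm_prod] at habs
  push_cast at habs
  have hterm : ∀ k ∈ Finset.range m,
      ‖1 - Complex.exp (2 * π * Complex.I / (m+1)) ^ (k+1)‖
        = 2 * Real.sin (π * (k+1) / (m+1)) := by
    intro k hk
    simp only [Finset.mem_range] at hk
    rw [← Complex.exp_nat_mul]
    have : ((k:ℂ)+1) * (2 * π * Complex.I / ((m:ℂ)+1))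
        = Complex.ofReal (2 * π * (k+1) / (m+1)) * Complex.I := by
      push_cast
      field_simp
    push_cast
    rw [this, abs_one_sub_exp]
    · congr 1
      ring
    · positivity
    · rw [div_le_iff₀ (by positivity)]
      have : (k:ℝ) + 1 ≤ m := by exact_mod_cast hk
      nlinarith [Real.pi_pos]
  rw [Finset.prod_congr rfl hterm] at habs
  have habs2 : ∏ k ∈ Finset.range m, (2 * Real.sin (π * (k+1) / (m+1))) = (m+1 : ℝ) := by
    rw [habs]
    rw [show ((m:ℂ)+1) = Complex.ofReal ((m:ℝ)+1) by push_cast; ring]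
    rw [Complex.norm_real, Real.norm_eq_abs, abs_of_nonneg (by positivity)]
  have := congrArg Real.log habs2
  rw [Real.log_prod] at this
  · rw [show (m+1) - 1 = m from rfl,
      show Finset.Icc 1 m = Finset.Ico 1 (m+1) by rw [Finset.Ico_add_one_right_eq_Icc],
      Finset.sum_Ico_eq_sum_range]
    simp only [Nat.add_sub_cancel]
    push_cast
    rw [← this]
    apply Finset.sum_congr rfl
    intro k _
    push_cast
    ring_nf
  · intro k hk
    simp only [Finset.mem_range] at hk
    have hs : 0 < Real.sin (π * (k+1) / (m+1)) := by
      apply Real.sin_pos_of_pos_of_lt_pi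
      · positivity
      · rw [div_lt_iff₀ (by positivity)]
        have : (k:ℝ) + 1 < m + 1 := by exact_mod_cast Nat.succ_lt_succ hk
        nlinarith [Real.pi_pos]
    positivity

noncomputable def phi (x : ℝ) : ℝ := Real.log (Real.sin x) - Real.log x
noncomputable def psi (x : ℝ) : ℝ := Real.cos x / Real.sin x - 1/x

lemma hasDerivAt_phi {x : ℝ} (hx : x ∈ Set.Ioo 0 π) : HasDerivAt phi (psi x) x := by
  have hs : 0 < Real.sin x := Real.sin_pos_of_pos_of_lt_pi hx.1 hx.2
  have h1 : HasDerivAt (fun y => Real.log (Real.sin y)) (Real.cos x / Real.sin x) x :=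
    (Real.hasDerivAt_sin x).log hs.ne'
  have h2 : HasDerivAt Real.log (1/x) x := by
    simpa [one_div] using Real.hasDerivAt_log hx.1.ne'
  exact h1.sub h2

lemma hasDerivAt_psi {x : ℝ} (hx : x ∈ Set.Ioo 0 π) :
    HasDerivAt psi (-(1/Real.sin x ^ 2) + 1/x^2) x := by
  have hs : 0 < Real.sin x := Real.sin_pos_of_pos_of_lt_pi hx.1 hx.2
  have h1 : HasDerivAt (fun y => Real.cos y / Real.sin y)
      ((-Real.sin x * Real.sin x - Real.cos x * Real.cos x) / Real.sin x ^ 2) x :=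
    (Real.hasDerivAt_cos x).div (Real.hasDerivAt_sin x) hs.ne'
  have h2 : HasDerivAt (fun y : ℝ => 1/y) (-(1/x^2)) x := by
    simpa [one_div] using (hasDerivAt_inv hx.1.ne')
  have h3 := h1.sub h2
  have hxy : (-Real.sin x * Real.sin x - Real.cos x * Real.cos x) / Real.sin x ^ 2 - -(1/x^2)
      = -(1/Real.sin x^2) + 1/x^2 := by
    rw [show -Real.sin x * Real.sin x - Real.cos x * Real.cos x = -1 by
      nlinarith [Real.sin_sq_add_cos_sq x]]
    ring
  rw [← hxy]
  exact h3
lemma psi_antitone : AntitoneOn psi (Set.Ioo 0 π) := by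
  apply antitoneOn_of_deriv_nonpos (convex_Ioo 0 π)
  · exact fun x hx => ((hasDerivAt_psi hx).continuousAt).continuousWithinAt
  · intro x hx
    rw [interior_Ioo] at hx
    exact ((hasDerivAt_psi hx).differentiableAt).differentiableWithinAt
  · intro x hx
    rw [interior_Ioo] at hx
    rw [(hasDerivAt_psi hx).deriv]
    have hs : 0 < Real.sin x := Real.sin_pos_of_pos_of_lt_pi hx.1 hx.2
    have hle : Real.sin x ≤ x := Real.sin_le hx.1.le
    have : 1/x^2 ≤ 1/Real.sin x^2 := by
      apply one_div_le_one_div_of_le (by positivity)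
      nlinarith
    linarith

lemma tangent_le {m x : ℝ} (hm : m ∈ Set.Ioo 0 π) (hx : x ∈ Set.Ioo 0 π) :
    phi x ≤ phi m + psi m * (x - m) := by
  rcases lt_trichotomy x m with h | h | h
  · obtain ⟨c, hc, hceq⟩ := exists_hasDerivAt_eq_slope phi psi h
      (fun y hy => ((hasDerivAt_phi ⟨lt_of_lt_of_le hx.1 hy.1,
        lt_of_le_of_lt hy.2 hm.2⟩).continuousAt).continuousWithinAt)
      (fun y hy => hasDerivAt_phi ⟨lt_trans hx.1 hy.1, lt_trans hy.2 hm.2⟩)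
    have hcmem : c ∈ Set.Ioo 0 π := ⟨lt_trans hx.1 hc.1, lt_trans hc.2 hm.2⟩
    have hpsi : psi m ≤ psi c := psi_antitone hcmem hm hc.2.le
    have : psi c = (phi m - phi x) / (m - x) := hceq
    rw [eq_div_iff (by linarith)] at this
    nlinarith
  · subst h; simp
  · obtain ⟨c, hc, hceq⟩ := exists_hasDerivAt_eq_slope phi psi h
      (fun y hy => ((hasDerivAt_phi ⟨lt_of_lt_of_le hm.1 hy.1,
        lt_of_le_of_lt hy.2 hx.2⟩).continuousAt).continuousWithinAt)
      (fun y hy => hasDerivAt_phi ⟨lt_trans hm.1 hy.1, lt_trans hy.2 hx.2⟩)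
    have hcmem : c ∈ Set.Ioo 0 π := ⟨lt_trans hm.1 hc.1, lt_trans hc.2 hx.2⟩
    have hpsi : psi c ≤ psi m := psi_antitone hm hcmem hc.1.le
    have : psi c = (phi x - phi m) / (x - m) := hceq
    rw [eq_div_iff (by linarith)] at this
    nlinarith

lemma log_quad_neg {r : ℝ} (h1 : -1 < r) (h0 : r ≤ 0) :
    Real.log (1 + r) ≤ r - r^2/2 := by
  set q : ℝ → ℝ := fun r => r - r^2/2 - Real.log (1+r) with hq
  have hd : ∀ x ∈ Set.Ioo (-1 : ℝ) 0, HasDerivAt q (1 - x - 1/(1+x)) x := by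
    intro x hx
    have hx1 : (0:ℝ) < 1 + x := by linarith [hx.1]
    have h1 : HasDerivAt (fun y : ℝ => y - y^2/2) (1 - x) x := by
      have := ((hasDerivAt_id x).sub (((hasDerivAt_pow 2 x)).div_const 2))
      exact this.congr_deriv (by push_cast; ring)
    have h2 : HasDerivAt (fun y : ℝ => Real.log (1+y)) (1/(1+x)) x := by
      have := ((hasDerivAt_id x).const_add 1).log hx1.ne'
      simpa using this
    exact h1.sub h2
  have hanti : AntitoneOn q (Set.Ioc (-1 : ℝ) 0) := by
    apply antitoneOn_of_deriv_nonpos (convex_Ioc (-1:ℝ) 0)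
    · intro x hx
      have hx1 : (0:ℝ) < 1 + x := by linarith [hx.1]
      apply ContinuousWithinAt.sub
      · exact (Continuous.continuousWithinAt (by continuity))
      · exact ((Real.continuousAt_log hx1.ne').comp (by fun_prop)).continuousWithinAt
    · intro x hx
      rw [interior_Ioc] at hx
      exact (hd x hx).differentiableAt.differentiableWithinAt
    · intro x hx
      rw [interior_Ioc] at hx
      rw [(hd x hx).deriv]
      have hx1 : (0:ℝ) < 1 + x := by linarith [hx.1]
      rw [sub_nonpos, ← sub_nonneg]
      have : 1/(1+x) - (1 - x) = x^2/(1+x) := by field_simp; ring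
      rw [this]
      positivity
  have := hanti (Set.mem_Ioc.2 ⟨h1, h0⟩) (Set.mem_Ioc.2 ⟨by norm_num, le_refl 0⟩) h0
  simp only [hq] at this
  simp at this
  linarith

lemma log_quad_pos {r : ℝ} (h0 : 0 ≤ r) (h1 : r ≤ 1) :
    Real.log (1 + r) ≤ r - r^2/4 := by
  set q : ℝ → ℝ := fun r => r - r^2/4 - Real.log (1+r) with hq
  have hd : ∀ x ∈ Set.Ioo (0 : ℝ) 1, HasDerivAt q (1 - x/2 - 1/(1+x)) x := by
    intro x hx
    have hx1 : (0:ℝ) < 1 + x := by linarith [hx.1]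
    have h1 : HasDerivAt (fun y : ℝ => y - y^2/4) (1 - x/2) x := by
      have := ((hasDerivAt_id x).sub (((hasDerivAt_pow 2 x)).div_const 4))
      exact this.congr_deriv (by push_cast; ring)
    have h2 : HasDerivAt (fun y : ℝ => Real.log (1+y)) (1/(1+x)) x := by
      have := ((hasDerivAt_id x).const_add 1).log hx1.ne'
      simpa using this
    exact h1.sub h2
  have hmono : MonotoneOn q (Set.Icc (0 : ℝ) 1) := by
    apply monotoneOn_of_deriv_nonneg (convex_Icc (0:ℝ) 1)
    · intro x hx
      have hx1 : (0:ℝ) < 1 + x := by linarith [hx.1]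
      apply ContinuousWithinAt.sub
      · exact (Continuous.continuousWithinAt (by continuity))
      · exact ((Real.continuousAt_log hx1.ne').comp (by fun_prop)).continuousWithinAt
    · intro x hx
      rw [interior_Icc] at hx
      exact (hd x hx).differentiableAt.differentiableWithinAt
    · intro x hx
      rw [interior_Icc] at hx
      rw [(hd x hx).deriv]
      have hx1 : (0:ℝ) < 1 + x := by linarith [hx.1]
      rw [← sub_nonneg]
      have : 1 - x/2 - 1/(1+x) - 0 = (x*(1-x))/(2*(1+x)) := by field_simp; ring
      rw [sub_zero] at this
      rw [this]
      have hnn : 0 ≤ x * (1-x) := mul_nonneg hx.1.le (by linarith [hx.2])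
      linarith [div_nonneg hnn (show (0:ℝ) ≤ 2*(1+x) by linarith)]
  have := hmono (Set.mem_Icc.2 ⟨le_refl 0, by norm_num⟩) (Set.mem_Icc.2 ⟨h0, h1⟩) h0
  simp only [hq] at this
  simp at this
  linarith

lemma log_lin_ge {r : ℝ} (h1 : 1 ≤ r) : 1 - Real.log 2 ≤ r - Real.log (1 + r) := by
  set q : ℝ → ℝ := fun r => r - Real.log (1+r) with hq
  have hd : ∀ x ∈ Set.Ioi (1:ℝ), HasDerivAt q (1 - 1/(1+x)) x := by
    intro x hx
    simp only [Set.mem_Ioi] at hx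
    have hx1 : (0:ℝ) < 1 + x := by linarith
    have h2 : HasDerivAt (fun y : ℝ => Real.log (1+y)) (1/(1+x)) x := by
      have := ((hasDerivAt_id x).const_add 1).log hx1.ne'
      simpa using this
    exact (hasDerivAt_id x).sub h2
  have hmono : MonotoneOn q (Set.Ici (1 : ℝ)) := by
    apply monotoneOn_of_deriv_nonneg (convex_Ici (1:ℝ))
    · intro x hx
      simp only [Set.mem_Ici] at hx
      have hx1 : (0:ℝ) < 1 + x := by linarith
      apply ContinuousWithinAt.sub
      · exact (Continuous.continuousWithinAt (by continuity))
      · exact ((Real.continuousAt_log hx1.ne').comp (by fun_prop)).continuousWithinAt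
    · intro x hx
      rw [interior_Ici] at hx
      exact (hd x hx).differentiableAt.differentiableWithinAt
    · intro x hx
      rw [interior_Ici] at hx
      rw [(hd x hx).deriv]
      simp only [Set.mem_Ioi] at hx
      have hx1 : (0:ℝ) < 1 + x := by linarith
      have : 1/(1+x) ≤ 1 := by rw [div_le_one hx1]; linarith
      linarith
  have := hmono (Set.mem_Ici.2 (le_refl 1)) (Set.mem_Ici.2 h1) h1
  simp only [hq] at this
  norm_num at this
  linarith

lemma jensen_scalar {r : ℝ} (hr : -1 < r) :
    r - Real.log (1 + r) ≥ (1/6) * min (r^2) 1 := by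
  rcases le_or_gt r 0 with h0 | h0
  · have hmin : min (r^2) 1 ≤ r^2 := min_le_left _ _
    have := log_quad_neg hr h0
    nlinarith
  rcases le_or_gt r 1 with h1 | h1
  · have hmin : min (r^2) 1 ≤ r^2 := min_le_left _ _
    have := log_quad_pos h0.le h1
    nlinarith
  · have hmin : min (r^2) 1 ≤ 1 := min_le_right _ _
    have := log_lin_ge h1.le
    have hlog2 : Real.log 2 < 0.6931471808 := Real.log_two_lt_d9
    nlinarith

lemma key_term {m x : ℝ} (hm : m ∈ Set.Ioo 0 π) (hx : x ∈ Set.Ioo 0 π) :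
    Real.log (2 * Real.sin m) + (Real.cos m / Real.sin m) * (x - m) - Real.log (2 * Real.sin x)
      ≥ (1/6) * min (((x - m)/m)^2) 1 := by
  have hsm : 0 < Real.sin m := Real.sin_pos_of_pos_of_lt_pi hm.1 hm.2
  have hsx : 0 < Real.sin x := Real.sin_pos_of_pos_of_lt_pi hx.1 hx.2
  have hm0 : m ≠ 0 := hm.1.ne'
  set r : ℝ := (x - m)/m with hrdef
  have hreq : r = x/m - 1 := by rw [hrdef]; field_simp
  have hr : -1 < r := by
    have : 0 < x / m := div_pos hx.1 hm.1
    rw [hreq]; linarith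
  have h1r : 1 + r = x / m := by rw [hreq]; ring
  have htan := tangent_le hm hx
  have hlogxm : Real.log (1 + r) = Real.log x - Real.log m := by
    rw [h1r, Real.log_div hx.1.ne' hm.1.ne']
  have hjen := jensen_scalar hr
  rw [Real.log_mul two_ne_zero hsm.ne', Real.log_mul two_ne_zero hsx.ne']
  simp only [phi, psi] at htan
  have hsplit : (Real.cos m/Real.sin m - 1/m) * (x-m) = (Real.cos m/Real.sin m)*(x-m) - r := by
    rw [hrdef]; field_simp
  rw [hsplit] at htan
  linarith [htan, hjen, hlogxm]

lemma sum_shift_one (a : ℕ → ℝ) (N : ℕ) (hper : ∀ i, a (i + N) = a i + N) :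
    ∑ i ∈ Finset.Icc 1 N, a (i + 1) = (∑ i ∈ Finset.Icc 1 N, a i) + N := by
  have h1 : ∑ i ∈ Finset.Icc 1 N, a (i + 1) = ∑ i ∈ Finset.Icc 2 (N+1), a i := by
    rw [show Finset.Icc 2 (N+1) = (Finset.Icc 1 N).map (addRightEmbedding 1) by
      rw [Finset.map_add_right_Icc]]
    rw [Finset.sum_map]
    rfl
  have h2 : ∑ i ∈ Finset.Icc 2 (N+1), a i = ∑ i ∈ Finset.Ioc 1 (N+1), a i := by
    rw [← Finset.Icc_add_one_left_eq_Ioc]; rfl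
  have h3 : (∑ i ∈ Finset.Ioc 0 1, a i) + ∑ i ∈ Finset.Ioc 1 (N+1), a i
      = ∑ i ∈ Finset.Ioc 0 (N+1), a i :=
    Finset.sum_Ioc_consecutive _ (by omega) (by omega)
  have h4 : ∑ i ∈ Finset.Ioc 0 1, a i = a 1 := by
    rw [show Finset.Ioc 0 1 = {1} by rfl, Finset.sum_singleton]
  have h5 : ∑ i ∈ Finset.Ioc 0 (N+1), a i = (∑ i ∈ Finset.Ioc 0 N, a i) + a (N+1) :=
    Finset.sum_Ioc_succ_top (by omega) _
  have h6 : a (N + 1) = a 1 + N := by rw [show N + 1 = 1 + N by omega, hper]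
  have h7 : ∑ i ∈ Finset.Icc 1 N, a i = ∑ i ∈ Finset.Ioc 0 N, a i := by
    rw [← Finset.Icc_add_one_left_eq_Ioc]; rfl
  rw [h1, h2, h7]
  rw [h6] at h5
  rw [h4] at h3
  linarith

lemma sum_shift (a : ℕ → ℝ) (N : ℕ) (hper : ∀ i, a (i + N) = a i + N) (p : ℕ) :
    ∑ i ∈ Finset.Icc 1 N, a (i + p) = (∑ i ∈ Finset.Icc 1 N, a i) + p * N := by
  induction p with
  | zero => simp
  | succ p ih =>
    have hb : ∀ i, (fun i => a (i + p)) (i + N) = (fun i => a (i + p)) i + N := by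
      intro i
      simp only
      rw [show i + N + p = (i + p) + N by omega, hper]
    have := sum_shift_one (fun i => a (i + p)) N hb
    have heq : ∀ i ∈ Finset.Icc 1 N, a (i + (p+1)) = a ((i + 1) + p) := by
      intro i _; congr 1; omega
    rw [Finset.sum_congr rfl heq, this, ih]
    push_cast
    ring

section
variable {N : ℕ} {a : ℕ → ℝ}

lemma u_bounds (hN : 2 ≤ N) (hper : ∀ i, a (i + N) = a i + N)
    (hmono : ∀ i j, 1 ≤ i → i < j → j ≤ N → a i < a j)
    (hrange : ∀ i, 1 ≤ i → i ≤ N → a i ∈ Set.Ico (0 : ℝ) N)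
    {p i : ℕ} (hp : 1 ≤ p) (hp' : p ≤ N - 1) (hi : 1 ≤ i) (hi' : i ≤ N) :
    0 < a (i + p) - a i ∧ a (i + p) - a i < N := by
  rcases le_or_gt (i + p) N with h | h
  · have h1 : a i < a (i + p) := hmono i (i + p) hi (by omega) h
    have h2 := hrange (i + p) (by omega) h
    have h3 := hrange i hi hi'
    constructor
    · linarith
    · linarith [h2.2, h3.1]
  · set j := i + p - N with hj
    have hj1 : 1 ≤ j := by omega
    have hjN : j + N = i + p := by omega
    have hji : j < i := by omega
    have hval : a (i + p) = a j + N := by rw [← hjN, hper]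
    have h1 : a j < a i := hmono j i hj1 hji hi'
    have h2 := hrange j hj1 (by omega)
    have h3 := hrange i hi hi'
    rw [hval]
    constructor
    · linarith [h2.1, h3.2]
    · linarith

lemma L_period (hN : 1 ≤ N) (x : ℝ) :
    Real.log |2 * Real.sin (π * (x + N) / N)| = Real.log |2 * Real.sin (π * x / N)| := by
  have hN0 : (N : ℝ) ≠ 0 := by positivity
  rw [show π * (x + N) / N = π * x / N + π by field_simp]
  rw [Real.sin_add_pi]
  rw [show (2 : ℝ) * -Real.sin (π * x / N) = -(2 * Real.sin (π * x / N)) by ring, abs_neg]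

lemma L_even (x : ℝ) :
    Real.log |2 * Real.sin (π * (-x) / N)| = Real.log |2 * Real.sin (π * x / N)| := by
  rw [show π * (-x) / N = -(π * x / N) by ring, Real.sin_neg]
  rw [show (2 : ℝ) * -Real.sin (π * x / N) = -(2 * Real.sin (π * x / N)) by ring, abs_neg]

lemma reindex_row (hN : 2 ≤ N) (hper : ∀ i, a (i + N) = a i + N)
    {i : ℕ} (hi : 1 ≤ i) (hi' : i ≤ N) :
    ∑ j ∈ Finset.Icc 1 N, (if i ≠ j then Real.log |2 * Real.sin (π * (a i - a j) / N)| else 0)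
      = ∑ p ∈ Finset.Icc 1 (N - 1), Real.log |2 * Real.sin (π * (a (i + p) - a i) / N)| := by
  obtain ⟨i', rfl⟩ : ∃ i', i = i' + 1 := ⟨i - 1, by omega⟩
  set i := i' + 1
  set L : ℝ → ℝ := fun x => Real.log |2 * Real.sin (π * x / N)| with hL
  -- LHS = sum over erase
  have hlhs : ∑ j ∈ Finset.Icc 1 N, (if i ≠ j then L (a i - a j) else 0)
      = ∑ j ∈ (Finset.Icc 1 N).erase i, L (a i - a j) := by
    rw [← Finset.sum_filter, Finset.filter_ne]
  -- decompose erase into Ioc 0 i' and Ioc i N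
  have hsplit : ∑ j ∈ (Finset.Icc 1 N).erase i, L (a i - a j)
      = (∑ j ∈ Finset.Ioc 0 i', L (a i - a j)) + ∑ j ∈ Finset.Ioc i N, L (a i - a j) := by
    have hIccIoc : Finset.Icc 1 N = Finset.Ioc 0 N := by rw [← Finset.Icc_add_one_left_eq_Ioc]; rfl
    have hmem : i ∈ Finset.Ioc 0 N := by simp [Finset.mem_Ioc]; omega
    have h1 : (∑ j ∈ Finset.Ioc 0 i', L (a i - a j)) + ∑ j ∈ Finset.Ioc i' N, L (a i - a j)
        = ∑ j ∈ Finset.Ioc 0 N, L (a i - a j) :=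
      Finset.sum_Ioc_consecutive _ (by omega) (by omega)
    have h2 : Finset.Ioc i' N = Finset.Icc i N := by rw [Finset.Icc_add_one_left_eq_Ioc]
    have h3 : ∑ j ∈ Finset.Icc i N, L (a i - a j)
        = L (a i - a i) + ∑ j ∈ Finset.Ioc i N, L (a i - a j) := by
      rw [Finset.Icc_eq_cons_Ioc (by omega), Finset.sum_cons]
    have h4 : ∑ j ∈ (Finset.Ioc 0 N).erase i, L (a i - a j)
        = (∑ j ∈ Finset.Ioc 0 N, L (a i - a j)) - L (a i - a i) := by
      rw [Finset.sum_erase_eq_sub hmem]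
    rw [hIccIoc, h4, ← h1, h2, h3]
    ring
  -- RHS decomposition
  have hrhs : ∑ p ∈ Finset.Icc 1 (N - 1), L (a (i + p) - a i)
      = (∑ p ∈ Finset.Ioc 0 (N - i), L (a (i + p) - a i))
        + ∑ p ∈ Finset.Ioc (N - i) (N - 1), L (a (i + p) - a i) := by
    rw [show Finset.Icc 1 (N-1) = Finset.Ioc 0 (N-1) from Finset.Icc_add_one_left_eq_Ioc 0 (N-1)]
    exact (Finset.sum_Ioc_consecutive _ (by omega) (by omega)).symm
  -- first block: p ↦ j = p + i
  have hfirst : ∑ p ∈ Finset.Ioc 0 (N - i), L (a (i + p) - a i)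
      = ∑ j ∈ Finset.Ioc i N, L (a i - a j) := by
    rw [show Finset.Ioc i N = (Finset.Ioc 0 (N - i)).map (addRightEmbedding i) by
      rw [Finset.map_add_right_Ioc]; congr 1 <;> omega]
    rw [Finset.sum_map]
    apply Finset.sum_congr rfl
    intro p hp
    simp only [addRightEmbedding_apply]
    rw [show a i - a (p + i) = -(a (i + p) - a i) by rw [show p + i = i + p by omega]; ring]
    rw [hL]
    exact (L_even _).symm
  -- second block: p ↦ j = p - (N - i)
  have hsecond : ∑ p ∈ Finset.Ioc (N - i) (N - 1), L (a (i + p) - a i)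
      = ∑ j ∈ Finset.Ioc 0 i', L (a i - a j) := by
    rw [show Finset.Ioc (N - i) (N - 1) = (Finset.Ioc 0 i').map (addRightEmbedding (N - i)) by
      rw [Finset.map_add_right_Ioc]; congr 1 <;> omega]
    rw [Finset.sum_map]
    apply Finset.sum_congr rfl
    intro j hj
    simp only [addRightEmbedding_apply, Finset.mem_Ioc] at hj ⊢
    have hidx : i + (j + (N - i)) = j + N := by omega
    rw [hidx, hper j]
    rw [hL]
    simp only
    rw [show a j + N - a i = (a j - a i) + N by ring]
    rw [L_period (by omega)]
    rw [show a j - a i = -(a i - a j) by ring]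
    exact L_even _
  rw [hlhs, hsplit, hrhs, hfirst, hsecond]
  ring

end

section
variable {N : ℕ} {a : ℕ → ℝ}

lemma per_p (hN : 2 ≤ N) (hper : ∀ i, a (i + N) = a i + N)
    (hmono : ∀ i j, 1 ≤ i → i < j → j ≤ N → a i < a j)
    (hrange : ∀ i, 1 ≤ i → i ≤ N → a i ∈ Set.Ico (0 : ℝ) N)
    {p : ℕ} (hp : 1 ≤ p) (hp' : p ≤ N - 1) :
    (N : ℝ) * Real.log (2 * Real.sin (π * p / N))
      - ∑ i ∈ Finset.Icc 1 N, Real.log (2 * Real.sin (π * (a (i + p) - a i) / N))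
    ≥ (1/6) * ∑ i ∈ Finset.Icc 1 N, min ((a (i + p) - a i - p)^2 / p^2) 1 := by
  have hN0 : (0:ℝ) < N := by exact_mod_cast (by omega : 0 < N)
  have hp0 : (0:ℝ) < p := by exact_mod_cast hp
  have hpN : (p:ℝ) < N := by exact_mod_cast (by omega : p < N)
  have hm : π * p / N ∈ Set.Ioo 0 π := by
    constructor
    · positivity
    · rw [div_lt_iff₀ hN0]
      nlinarith [Real.pi_pos]
  -- per-term bound
  have hterm : ∀ i ∈ Finset.Icc 1 N,
      (1/6) * min ((a (i + p) - a i - p)^2 / p^2) 1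
        ≤ Real.log (2 * Real.sin (π * p / N))
          + (Real.cos (π * p / N) / Real.sin (π * p / N)) * (π * (a (i + p) - a i) / N - π * p / N)
          - Real.log (2 * Real.sin (π * (a (i + p) - a i) / N)) := by
    intro i hi
    rw [Finset.mem_Icc] at hi
    obtain ⟨hu1, hu2⟩ := u_bounds hN hper hmono hrange hp hp' hi.1 hi.2
    have hx : π * (a (i + p) - a i) / N ∈ Set.Ioo 0 π := by
      constructor
      · positivity
      · rw [div_lt_iff₀ hN0]
        nlinarith [Real.pi_pos]
    have hkt := key_term hm hx
    have hratio : ((π * (a (i + p) - a i) / N - π * p / N) / (π * p / N))^2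
        = (a (i + p) - a i - p)^2 / p^2 := by
      rw [show (π * (a (i + p) - a i) / N - π * p / N) / (π * p / N)
          = (a (i + p) - a i - p) / p by
        field_simp]
      rw [div_pow]
    rw [hratio] at hkt
    linarith
  have hsum := Finset.sum_le_sum hterm
  rw [← Finset.mul_sum] at hsum
  -- linear terms sum to zero
  have hsum_u : ∑ i ∈ Finset.Icc 1 N, (a (i + p) - a i) = p * N := by
    rw [Finset.sum_sub_distrib, sum_shift a N hper p]
    ring
  have hzero : ∑ i ∈ Finset.Icc 1 N, (π * (a (i + p) - a i) / N - π * p / N) = 0 := by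
    have h1 : ∀ i ∈ Finset.Icc 1 N, π * (a (i + p) - a i) / N - π * p / N
        = (π / N) * ((a (i + p) - a i) - p) := fun i _ => by ring
    rw [Finset.sum_congr rfl h1, ← Finset.mul_sum, Finset.sum_sub_distrib,
      Finset.sum_const, Nat.card_Icc, show N + 1 - 1 = N from rfl, nsmul_eq_mul, hsum_u]
    ring
  have hexpand : ∑ i ∈ Finset.Icc 1 N,
      (Real.log (2 * Real.sin (π * p / N))
        + (Real.cos (π * p / N) / Real.sin (π * p / N)) * (π * (a (i + p) - a i) / N - π * p / N)
        - Real.log (2 * Real.sin (π * (a (i + p) - a i) / N)))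
      = (N : ℝ) * Real.log (2 * Real.sin (π * p / N))
        + (Real.cos (π * p / N) / Real.sin (π * p / N))
            * ∑ i ∈ Finset.Icc 1 N, (π * (a (i + p) - a i) / N - π * p / N)
        - ∑ i ∈ Finset.Icc 1 N, Real.log (2 * Real.sin (π * (a (i + p) - a i) / N)) := by
    rw [Finset.sum_sub_distrib, Finset.sum_add_distrib, Finset.sum_const, Nat.card_Icc,
      show N + 1 - 1 = N from rfl, nsmul_eq_mul, ← Finset.mul_sum]
  rw [hexpand, hzero] at hsum
  simp only [mul_zero, add_zero] at hsum
  linarith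

end

theorem quantitative_crystallization :
    ∃ C > (0 : ℝ), ∀ (N : ℕ), 2 ≤ N → ∀ a : ℕ → ℝ,
      (∀ i, a (i + N) = a i + N) →
      (∀ i j, 1 ≤ i → i < j → j ≤ N → a i < a j) →
      (∀ i, 1 ≤ i → i ≤ N → a i ∈ Set.Ico (0 : ℝ) N) →
      (-(Real.pi / N) * (∑ i ∈ Finset.Icc 1 N, ∑ j ∈ Finset.Icc 1 N,
            if i ≠ j then Real.log |2 * Real.sin (Real.pi * (a i - a j) / N)| else 0) -
          Real.pi * Real.log (2 * Real.pi / N)) - (-Real.pi * Real.log (2 * Real.pi)) ≥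
        C * ∑ p ∈ Finset.Icc 1 (N / 2), (1 / (N : ℝ)) *
          ∑ i ∈ Finset.Icc 1 N, min ((a (i + p) - a i - (p : ℝ)) ^ 2 / (p : ℝ) ^ 2) 1 := by
  refine ⟨π / 6, by positivity, ?_⟩
  intro N hN a hper hmono hrange
  have hN0 : (0:ℝ) < N := by exact_mod_cast (by omega : 0 < N)
  -- rewrite double sum
  have hT : (∑ i ∈ Finset.Icc 1 N, ∑ j ∈ Finset.Icc 1 N,
        if i ≠ j then Real.log |2 * Real.sin (π * (a i - a j) / N)| else 0)
      = ∑ p ∈ Finset.Icc 1 (N - 1), ∑ i ∈ Finset.Icc 1 N,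
          Real.log (2 * Real.sin (π * (a (i + p) - a i) / N)) := by
    rw [Finset.sum_congr rfl (fun i hi => reindex_row hN hper
      (Finset.mem_Icc.1 hi).1 (Finset.mem_Icc.1 hi).2)]
    rw [Finset.sum_comm]
    apply Finset.sum_congr rfl
    intro p hp
    apply Finset.sum_congr rfl
    intro i hi
    rw [Finset.mem_Icc] at hp hi
    obtain ⟨hu1, hu2⟩ := u_bounds hN hper hmono hrange hp.1 hp.2 hi.1 hi.2
    have hs : 0 < Real.sin (π * (a (i + p) - a i) / N) := by
      apply Real.sin_pos_of_pos_of_lt_pi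
      · positivity
      · rw [div_lt_iff₀ hN0]
        nlinarith [Real.pi_pos]
    rw [abs_of_pos (by positivity)]
  -- log of constants
  have hlogdiv : Real.log (2 * π / N) = Real.log (2 * π) - Real.log N :=
    Real.log_div (by positivity) hN0.ne'
  -- key sum
  set S : ℝ := ∑ p ∈ Finset.Icc 1 (N - 1),
      ((N : ℝ) * Real.log (2 * Real.sin (π * p / N))
        - ∑ i ∈ Finset.Icc 1 N, Real.log (2 * Real.sin (π * (a (i + p) - a i) / N))) with hSdef
  have hSval : S = (N : ℝ) * Real.log N
      - ∑ p ∈ Finset.Icc 1 (N - 1), ∑ i ∈ Finset.Icc 1 N,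
          Real.log (2 * Real.sin (π * (a (i + p) - a i) / N)) := by
    rw [hSdef, Finset.sum_sub_distrib, ← Finset.mul_sum, prod_sin N (by omega)]
  -- lower bound on S
  have hSlb : S ≥ ∑ p ∈ Finset.Icc 1 (N / 2),
      (1/6) * ∑ i ∈ Finset.Icc 1 N, min ((a (i + p) - a i - p)^2 / p^2) 1 := by
    have h1 : S ≥ ∑ p ∈ Finset.Icc 1 (N - 1),
        (1/6) * ∑ i ∈ Finset.Icc 1 N, min ((a (i + p) - a i - p)^2 / p^2) 1 := by
      rw [hSdef]
      apply Finset.sum_le_sum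
      intro p hp
      rw [Finset.mem_Icc] at hp
      exact per_p hN hper hmono hrange hp.1 hp.2
    refine le_trans ?_ h1
    apply Finset.sum_le_sum_of_subset_of_nonneg
    · apply Finset.Icc_subset_Icc_right
      omega
    · intro p _ _
      apply mul_nonneg (by norm_num)
      apply Finset.sum_nonneg
      intro i _
      exact le_min (by positivity) (by norm_num)
  -- assemble
  rw [hT, hlogdiv]
  have hgoal : -(π / N) * (∑ p ∈ Finset.Icc 1 (N - 1), ∑ i ∈ Finset.Icc 1 N,
        Real.log (2 * Real.sin (π * (a (i + p) - a i) / N)))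
      - π * (Real.log (2 * π) - Real.log N) - (-π * Real.log (2 * π))
      = (π / N) * S := by
    rw [hSval]
    field_simp
    ring
  rw [hgoal]
  have hrhs : (π / 6) * ∑ p ∈ Finset.Icc 1 (N / 2), (1 / (N : ℝ)) *
        ∑ i ∈ Finset.Icc 1 N, min ((a (i + p) - a i - (p : ℝ)) ^ 2 / (p : ℝ) ^ 2) 1
      = (π / N) * ∑ p ∈ Finset.Icc 1 (N / 2),
        (1/6) * ∑ i ∈ Finset.Icc 1 N, min ((a (i + p) - a i - p)^2 / p^2) 1 := by
    rw [Finset.mul_sum, Finset.mul_sum]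
    apply Finset.sum_congr rfl
    intro p _
    ring
  rw [hrhs]
  apply mul_le_mul_of_nonneg_left hSlb (by positivity)
end
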